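/- For n ≥ 2 and the Fourier matrix u on ℤ/nℤ, the complex dimension of the subspace {f : ZMod n × ZMod n → ℂ | C_u f = D_u f} equals 2n - 1 if and only if n is prime. -/

import Mathlib

open Finset Matrix

/-- The symbol-to-operator map `C_u` as a complex-linear map. -/
noncomputable def CL {ι : Type*} [Fintype ι] (u : Matrix ι ι ℂ) :
    ((ι × ι) → ℂ) →ₗ[ℂ] Matrix ι ι ℂ where
  toFun f := fun k k' => ∑ l, u k l * f (k, l) * (starRingEnd ℂ) (u k' l)
  map_add' f g := by
    funext k k'
    simp [mul_add, add_mul, Finset.sum_add_distrib]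
    rfl
  map_smul' c f := by
    funext k k'
    simp only [Pi.smul_apply, smul_eq_mul, RingHom.id_apply, Matrix.smul_apply]
    show _ = c * ∑ l, u k l * f (k, l) * (starRingEnd ℂ) (u k' l)
    rw [Finset.mul_sum]
    exact Finset.sum_congr rfl fun l _ => by ring

/-- The symbol-to-operator map `D_u` as a complex-linear map. -/
noncomputable def DL {ι : Type*} [Fintype ι] (u : Matrix ι ι ℂ) :
    ((ι × ι) → ℂ) →ₗ[ℂ] Matrix ι ι ℂ where
  toFun f := fun k k' => ∑ l, u k l * f (k', l) * (starRingEnd ℂ) (u k' l)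
  map_add' f g := by
    funext k k'
    simp [mul_add, add_mul, Finset.sum_add_distrib]
    rfl
  map_smul' c f := by
    funext k k'
    simp only [Pi.smul_apply, smul_eq_mul, RingHom.id_apply, Matrix.smul_apply]
    show _ = c * ∑ l, u k l * f (k', l) * (starRingEnd ℂ) (u k' l)
    rw [Finset.mul_sum]
    exact Finset.sum_congr rfl fun l _ => by ring

section Aux

open ZMod Complex

variable {n : ℕ} [NeZero n]

lemma eps_eq_one_iff (t : ZMod n) : stdAddChar t = 1 ↔ t = 0 := by
  constructor
  · intro h
    have := injective_stdAddChar (N := n) (a₁ := t) (a₂ := 0)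
    simp only [AddChar.map_zero_eq_one] at this
    exact this h
  · rintro rfl; exact AddChar.map_zero_eq_one _

lemma eps_conj (t : ZMod n) : (starRingEnd ℂ) (stdAddChar t) = stdAddChar (-t) := by
  have h1 : stdAddChar t * stdAddChar (-t) = 1 := by
    rw [← AddChar.map_add_eq_mul]; simp
  have h2 : stdAddChar t * (starRingEnd ℂ) (stdAddChar t) = 1 := by
    rw [mul_comm, Complex.conj_mul']
    rw [stdAddChar_apply]
    norm_cast
    simp
    exact Or.inl (Circle.norm_coe _)
  have hne : stdAddChar t ≠ 0 := by
    intro h; rw [h, zero_mul] at h1; exact one_ne_zero h1.symm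
  rw [← h1] at h2
  exact (mul_left_cancel₀ hne h2)

/-- shift lemma for the discrete Fourier transform -/
lemma dft_shift (Φ : ZMod n → ℂ) (d m : ZMod n) :
    dft (fun k => Φ (k + d)) m = stdAddChar (d * m) * dft Φ m := by
  rw [dft_apply, dft_apply, Finset.mul_sum]
  refine Fintype.sum_equiv (Equiv.addRight d) _ _ (fun j => ?_)
  simp only [Equiv.coe_addRight, smul_eq_mul, ← mul_assoc, ← AddChar.map_add_eq_mul]
  congr 2
  ring

variable (n) in
/-- 2D discrete Fourier transform as a linear equivalence. -/
noncomputable def F2 : ((ZMod n × ZMod n) → ℂ) ≃ₗ[ℂ] ((ZMod n × ZMod n) → ℂ) :=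
  (LinearEquiv.curry ℂ ℂ (ZMod n) (ZMod n)).trans <|
    ((dft (N := n) (E := ZMod n → ℂ)).trans
      (LinearEquiv.piCongrRight fun _ => dft)).trans
    (LinearEquiv.curry ℂ ℂ (ZMod n) (ZMod n)).symm

lemma F2_apply (f : (ZMod n × ZMod n) → ℂ) (m d : ZMod n) :
    F2 n f (m, d) = ∑ k, stdAddChar (-(k * m)) *
      ∑ l, stdAddChar (-(l * d)) * f (k, l) := by
  simp only [F2, LinearEquiv.trans_apply, LinearEquiv.coe_curry, LinearEquiv.coe_curry_symm,
    LinearEquiv.piCongrRight_apply, Function.uncurry, dft_apply]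
  simp only [Finset.sum_apply, Pi.smul_apply, smul_eq_mul, Function.curry, Finset.mul_sum]
  rw [Finset.sum_comm]
  refine Finset.sum_congr rfl fun k _ => Finset.sum_congr rfl fun l _ => by ring

set_option maxHeartbeats 1000000 in
lemma ker_iff (u : Matrix (ZMod n) (ZMod n) ℂ)
    (hu : ∀ k l, u k l = stdAddChar (k * l) / (Real.sqrt n : ℝ))
    (f : (ZMod n × ZMod n) → ℂ) :
    (CL u - DL u) f = 0 ↔ ∀ m d : ZMod n, m * d ≠ 0 → F2 n f (m, d) = 0 := by
  have hn0 : (n : ℂ) ≠ 0 := Nat.cast_ne_zero.mpr (NeZero.ne n)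
  have hud : ∀ k k' l : ZMod n,
      u k l * (starRingEnd ℂ) (u k' l) = stdAddChar ((k - k') * l) * (n : ℂ)⁻¹ := by
    intro k k' l
    rw [hu, hu, map_div₀, eps_conj, Complex.conj_ofReal, div_mul_div_comm,
      ← AddChar.map_add_eq_mul]
    have hsq : ((Real.sqrt n : ℝ) : ℂ) * ((Real.sqrt n : ℝ) : ℂ) = (n : ℂ) := by
      norm_cast
      exact Real.mul_self_sqrt (Nat.cast_nonneg n)
    rw [hsq, div_eq_mul_inv]
    congr 2
    ring
  have hentry : ∀ k k' : ZMod n, (CL u - DL u) f k k' =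
      (∑ l, stdAddChar ((k - k') * l) * (f (k, l) - f (k', l))) * (n : ℂ)⁻¹ := by
    intro k k'
    have h0 : (CL u - DL u) f k k'
        = ∑ l, u k l * f (k, l) * (starRingEnd ℂ) (u k' l)
          - ∑ l, u k l * f (k', l) * (starRingEnd ℂ) (u k' l) := by
      simp [CL, DL]
      rfl
    rw [h0, ← Finset.sum_sub_distrib, Finset.sum_mul]
    refine Finset.sum_congr rfl fun l _ => ?_
    rw [show u k l * f (k, l) * (starRingEnd ℂ) (u k' l)
          - u k l * f (k', l) * (starRingEnd ℂ) (u k' l)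
        = (u k l * (starRingEnd ℂ) (u k' l)) * (f (k, l) - f (k', l)) by ring,
      hud k k' l]
    ring
  set G : ZMod n → ZMod n → ℂ := fun k d => dft (fun l => f (k, l)) d with hG
  have step1 : (CL u - DL u) f = 0 ↔
      ∀ k k' : ZMod n, ∑ l, stdAddChar ((k - k') * l) * (f (k, l) - f (k', l)) = 0 := by
    constructor
    · intro h k k'
      have h0 : (CL u - DL u) f k k' = 0 := by rw [h]; rfl
      rw [hentry k k'] at h0
      rcases mul_eq_zero.mp h0 with h1 | h1
      · exact h1
      · exact absurd h1 (inv_ne_zero hn0)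
    · intro h
      funext k k'
      rw [show (0 : Matrix (ZMod n) (ZMod n) ℂ) k k' = 0 from rfl, hentry, h, zero_mul]
  have key2 : ∀ k k' : ZMod n,
      ∑ l, stdAddChar ((k - k') * l) * (f (k, l) - f (k', l))
        = G k (k' - k) - G k' (k' - k) := by
    intro k k'
    simp only [hG, dft_apply, smul_eq_mul, ← Finset.sum_sub_distrib]
    refine Finset.sum_congr rfl fun l _ => ?_
    have h3 : (k - k') * l = -(l * (k' - k)) := by ring
    rw [h3]; ring
  have step2 : (∀ k k' : ZMod n,
        ∑ l, stdAddChar ((k - k') * l) * (f (k, l) - f (k', l)) = 0)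
      ↔ ∀ k d : ZMod n, G k d = G (k + d) d := by
    constructor
    · intro h k d
      have h1 := h k (k + d)
      rw [key2] at h1
      have h2 := sub_eq_zero.mp h1
      rwa [add_sub_cancel_left] at h2
    · intro h k k'
      rw [key2, sub_eq_zero]
      have h1 := h k (k' - k)
      have e : k + (k' - k) = k' := by ring
      rwa [e] at h1
  have hF2 : ∀ m d : ZMod n, F2 n f (m, d) = dft (fun k => G k d) m := by
    intro m d
    rw [F2_apply, dft_apply]
    refine Finset.sum_congr rfl fun k _ => ?_
    simp only [hG, dft_apply, smul_eq_mul]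
  have step3 : (∀ k d : ZMod n, G k d = G (k + d) d)
      ↔ ∀ m d : ZMod n, m * d ≠ 0 → F2 n f (m, d) = 0 := by
    constructor
    · intro h m d hmd
      have he : (fun k => G k d) = (fun k => G (k + d) d) := funext fun k => h k d
      have h2 : F2 n f (m, d) = stdAddChar (d * m) * F2 n f (m, d) := by
        rw [hF2 m d]
        conv_lhs => rw [he]
        exact dft_shift (fun k => G k d) d m
      have hne : stdAddChar (d * m) ≠ 1 := fun hc =>
        hmd (by rw [mul_comm]; exact (eps_eq_one_iff _).mp hc)
      have h3 : (1 - stdAddChar (d * m)) * F2 n f (m, d) = 0 := by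
        rw [sub_mul, one_mul, ← h2, sub_self]
      rcases mul_eq_zero.mp h3 with h' | h'
      · exact absurd (sub_eq_zero.mp h').symm hne
      · exact h'
    · intro h k d
      have he : dft (fun k => G k d) = dft (fun k => G (k + d) d) := by
        funext m
        rw [show (dft (fun k => G (k + d) d) m : ℂ)
            = ZMod.stdAddChar (d * m) * dft (fun k => G k d) m from dft_shift (fun k => G k d) d m]
        rcases eq_or_ne (d * m) 0 with h0 | h0
        · rw [h0, AddChar.map_zero_eq_one, one_mul]
        · have hmd : m * d ≠ 0 := by rwa [mul_comm]
          rw [← hF2, h m d hmd, mul_zero]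
      have h4 := (dft (N := n) (E := ℂ)).injective he
      exact congrFun h4 k
  exact step1.trans (step2.trans step3)

end Aux

/-- for `n ≥ 2` and the Fourier matrix `u k l = ε(k·l)/√n` on `ℤ/nℤ`, the
complex dimension of the eigenvalue-1 eigenspace `{f | C_u f = D_u f}` of the Berezin
transform equals `2n - 1` if and only if `n` is prime. -/
theorem stmt13 (n : ℕ) [NeZero n] (hn : 2 ≤ n)
    (ε : ZMod n → ℂ)
    (hε : ∀ m : ZMod n, ε m = Complex.exp (2 * Real.pi * Complex.I * m.val / n))
    (u : Matrix (ZMod n) (ZMod n) ℂ)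
    (hu : ∀ k l, u k l = ε (k * l) / Real.sqrt n) :
    Module.finrank ℂ ↥(LinearMap.ker (CL u - DL u)) = 2 * n - 1 ↔ n.Prime := by
  classical
  have hε' : ∀ m : ZMod n, ε m = ZMod.stdAddChar m := by
    intro m
    rw [hε, ZMod.stdAddChar_apply, ZMod.toCircle_apply]
  have hu' : ∀ k l, u k l = ZMod.stdAddChar (k * l) / (Real.sqrt n : ℝ) := by
    intro k l; rw [hu, hε']
  -- the subtype of "bad" frequencies
  have hker : LinearMap.ker (CL u - DL u)
      = (LinearMap.ker (LinearMap.funLeft ℂ ℂ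
          (Subtype.val : {p : ZMod n × ZMod n // p.1 * p.2 ≠ 0} → ZMod n × ZMod n))).comap
        (F2 n : ((ZMod n × ZMod n) → ℂ) →ₗ[ℂ] ((ZMod n × ZMod n) → ℂ)) := by
    ext f
    rw [LinearMap.mem_ker, Submodule.mem_comap, LinearMap.mem_ker, ker_iff u hu' f]
    constructor
    · intro h
      funext t
      simpa using h t.1.1 t.1.2 t.2
    · intro h m d hmd
      have := congrFun h ⟨(m, d), hmd⟩
      simpa using this
  have h1 : Module.finrank ℂ ↥(LinearMap.ker (CL u - DL u))
      = Module.finrank ℂ ↥(LinearMap.ker (LinearMap.funLeft ℂ ℂ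
          (Subtype.val : {p : ZMod n × ZMod n // p.1 * p.2 ≠ 0} → ZMod n × ZMod n))) := by
    rw [hker, Submodule.comap_equiv_eq_map_symm]
    exact LinearEquiv.finrank_map_eq _ _
  have h2 : Module.finrank ℂ ↥(LinearMap.ker (LinearMap.funLeft ℂ ℂ
        (Subtype.val : {p : ZMod n × ZMod n // p.1 * p.2 ≠ 0} → ZMod n × ZMod n)))
      + Fintype.card {p : ZMod n × ZMod n // p.1 * p.2 ≠ 0} = n * n := by
    have hs : Function.Surjective (LinearMap.funLeft ℂ ℂ
        (Subtype.val : {p : ZMod n × ZMod n // p.1 * p.2 ≠ 0} → ZMod n × ZMod n)) :=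
      LinearMap.funLeft_surjective_of_injective ℂ ℂ _ Subtype.val_injective
    have h3 := LinearMap.finrank_range_add_finrank_ker (LinearMap.funLeft ℂ ℂ
        (Subtype.val : {p : ZMod n × ZMod n // p.1 * p.2 ≠ 0} → ZMod n × ZMod n))
    rw [LinearMap.range_eq_top.mpr hs, finrank_top] at h3
    rw [Module.finrank_fintype_fun_eq_card, Module.finrank_fintype_fun_eq_card,
      Fintype.card_prod, ZMod.card] at h3
    omega
  have hcardT : Fintype.card {p : ZMod n × ZMod n // p.1 * p.2 ≠ 0}
      = (Finset.univ.filter (fun p : ZMod n × ZMod n => ¬ p.1 * p.2 = 0)).card :=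
    Fintype.card_subtype _
  have hsplit : (Finset.univ.filter (fun p : ZMod n × ZMod n => p.1 * p.2 = 0)).card
      + (Finset.univ.filter (fun p : ZMod n × ZMod n => ¬ p.1 * p.2 = 0)).card = n * n := by
    rw [Finset.card_filter_add_card_filter_not, Finset.card_univ,
      Fintype.card_prod, ZMod.card]
  have hS : Module.finrank ℂ ↥(LinearMap.ker (CL u - DL u))
      = (Finset.univ.filter (fun p : ZMod n × ZMod n => p.1 * p.2 = 0)).card := by
    omega
  rw [hS]
  -- now a counting problem
  have hS0 : (Finset.univ.filter (fun p : ZMod n × ZMod n => p.1 = 0 ∨ p.2 = 0)).card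
      = 2 * n - 1 := by
    have hc : (Finset.univ.filter (fun p : ZMod n × ZMod n => ¬ (p.1 = 0 ∨ p.2 = 0)))
        = (Finset.univ.filter (fun x : ZMod n => x ≠ 0)) ×ˢ
          (Finset.univ.filter (fun x : ZMod n => x ≠ 0)) := by
      ext p
      simp only [Finset.mem_filter, Finset.mem_univ, true_and, Finset.mem_product]
      tauto
    have hne : (Finset.univ.filter (fun x : ZMod n => x ≠ 0)).card = n - 1 := by
      rw [Finset.filter_ne' Finset.univ 0, Finset.card_erase_of_mem (Finset.mem_univ 0),
        Finset.card_univ, ZMod.card]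
    have hsplit0 := Finset.card_filter_add_card_filter_not
      (s := (Finset.univ : Finset (ZMod n × ZMod n)))
      (p := fun p : ZMod n × ZMod n => p.1 = 0 ∨ p.2 = 0)
    rw [hc, Finset.card_product, hne, Finset.card_univ, Fintype.card_prod, ZMod.card] at hsplit0
    obtain ⟨m, rfl⟩ : ∃ m, n = m + 2 := ⟨n - 2, by omega⟩
    have e1 : (m + 2) * (m + 2) = m * m + 4 * m + 4 := by ring
    have e2 : (m + 2 - 1) * (m + 2 - 1) = m * m + 2 * m + 1 := by
      have : m + 2 - 1 = m + 1 := rfl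
      rw [this]; ring
    set q := m * m with hq
    omega
  have hNZD : (∀ a b : ZMod n, a * b = 0 → a = 0 ∨ b = 0) ↔ n.Prime := by
    constructor
    · intro h
      by_contra hp
      obtain ⟨a, ha, h2a, han⟩ := Nat.exists_dvd_of_not_prime2 hn hp
      obtain ⟨b, hb⟩ := ha
      have hb2 : 2 ≤ b := by nlinarith
      have hbn : b < n := by nlinarith
      have hA : (a : ZMod n) ≠ 0 := by
        rw [Ne, ZMod.natCast_eq_zero_iff]
        intro hd
        exact absurd (Nat.le_of_dvd (by omega) hd) (by omega)
      have hB : (b : ZMod n) ≠ 0 := by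
        rw [Ne, ZMod.natCast_eq_zero_iff]
        intro hd
        exact absurd (Nat.le_of_dvd (by omega) hd) (by omega)
      have hAB : (a : ZMod n) * (b : ZMod n) = 0 := by
        rw [← Nat.cast_mul, ← hb, ZMod.natCast_self]
      rcases h _ _ hAB with h' | h' <;> [exact hA h'; exact hB h']
    · intro hp a b hab
      haveI := Fact.mk hp
      exact mul_eq_zero.mp hab
  rw [← hNZD]
  constructor
  · intro hcard
    by_contra hc
    push_neg at hc
    obtain ⟨a, b, hab, ha, hb⟩ := hc
    have hsub : (Finset.univ.filter (fun p : ZMod n × ZMod n => p.1 = 0 ∨ p.2 = 0))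
        ⊂ (Finset.univ.filter (fun p : ZMod n × ZMod n => p.1 * p.2 = 0)) := by
      rw [Finset.ssubset_iff_of_subset]
      · exact ⟨(a, b), by simp [hab], by simp [ha, hb]⟩
      · intro p hp
        simp only [Finset.mem_filter, Finset.mem_univ, true_and] at hp ⊢
        rcases hp with h0 | h0 <;> simp [h0]
    have := Finset.card_lt_card hsub
    omega
  · intro h
    have he : (Finset.univ.filter (fun p : ZMod n × ZMod n => p.1 * p.2 = 0))
        = (Finset.univ.filter (fun p : ZMod n × ZMod n => p.1 = 0 ∨ p.2 = 0)) := by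
      ext p
      simp only [Finset.mem_filter, Finset.mem_univ, true_and]
      constructor
      · exact h p.1 p.2
      · rintro (h0 | h0) <;> simp [h0]
    rw [he, hS0]
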